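/- Let α be a type and let f, g : α → ℝ. Then f and g are antimonotone if and only if f and −g are comonotone, and this holds if and only if there exist a function k : α → ℝ, a nondecreasing function h₁ : ℝ → ℝ and a nonincreasing function h₂ : ℝ → ℝ such that f = h₁ ∘ k and g = h₂ ∘ k. -/

import Mathlib

/-- Two functions are comonotone if increments always agree in sign. -/
def Comonotone {α : Type*} (f g : α → ℝ) : Prop :=
  ∀ x x', 0 ≤ (f x - f x') * (g x - g x')

/-- Two functions are antimonotone if increments always disagree in sign. -/
def Antimonotone {α : Type*} (f g : α → ℝ) : Prop :=
  ∀ x x', (f x - f x') * (g x - g x') ≤ 0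

theorem antimonotone_iff_comonotone_neg_iff_common_factor {α : Type*} (f g : α → ℝ) :
    (Antimonotone f g ↔ Comonotone f (-g)) ∧
    (Antimonotone f g ↔
      ∃ (k : α → ℝ) (h₁ h₂ : ℝ → ℝ), Monotone h₁ ∧ Antitone h₂ ∧
        f = h₁ ∘ k ∧ g = h₂ ∘ k) := by
  classical
  refine ⟨⟨fun H x x' => by have := H x x'; simp only [Pi.neg_apply]; nlinarith,
           fun H x x' => by have := H x x'; simp only [Pi.neg_apply] at this; nlinarith⟩, ?_, ?_⟩
  · intro H
    set k : α → ℝ := fun x => f x - g x with hkdef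
    have hf : ∀ x y : α, k y ≤ k x → f y ≤ f x := by
      intro x y h
      by_contra hc
      push_neg at hc
      have h1 := H y x
      have h2 : g y - g x ≤ 0 := by nlinarith
      have h3 : k x < k y := by simp only [hkdef]; linarith
      linarith
    have hg : ∀ x y : α, k y ≤ k x → g x ≤ g y := by
      intro x y h
      by_contra hc
      push_neg at hc
      have h1 := H y x
      have h2 : 0 ≤ f y - f x := by nlinarith
      have h3 : k x < k y := by simp only [hkdef]; linarith
      linarith
    -- boundedness of f above / g below on sublevel sets of k
    have bddA : ∀ t : ℝ, BddAbove (f '' {x | k x ≤ t}) := by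
      intro t
      rcases Set.eq_empty_or_nonempty {x | k x ≤ t} with he | ⟨x₀, hx₀⟩
      · rw [he, Set.image_empty]; exact bddAbove_empty
      · refine ⟨max (f x₀) (t + g x₀), ?_⟩
        rintro _ ⟨y, hy, rfl⟩
        by_cases hfy : f y ≤ f x₀
        · exact le_max_of_le_left hfy
        · push_neg at hfy
          have h1 := H y x₀
          have h2 : g y ≤ g x₀ := by nlinarith
          have : f y = k y + g y := by simp [hkdef]
          have : f y ≤ t + g x₀ := by
            have := hy
            simp only [Set.mem_setOf_eq, hkdef] at this
            linarith
          exact le_max_of_le_right this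
    have bddB : ∀ t : ℝ, BddBelow (g '' {x | k x ≤ t}) := by
      intro t
      rcases Set.eq_empty_or_nonempty {x | k x ≤ t} with he | ⟨x₀, hx₀⟩
      · rw [he, Set.image_empty]; exact bddBelow_empty
      · refine ⟨min (g x₀) (f x₀ - t), ?_⟩
        rintro _ ⟨y, hy, rfl⟩
        by_cases hgy : g x₀ ≤ g y
        · exact le_trans (min_le_left _ _) hgy
        · push_neg at hgy
          have h1 := H y x₀
          have h2 : f x₀ ≤ f y := by nlinarith
          have hy' : f y - g y ≤ t := hy
          refine le_trans (min_le_right _ _) ?_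
          linarith
    -- when a sublevel set is empty, f is bounded below and g above globally
    have bddRf : ∀ t : ℝ, {x | k x ≤ t} = ∅ → BddBelow (Set.range f) := by
      intro t ht
      rcases isEmpty_or_nonempty α with hα | hα
      · haveI := hα; rw [Set.range_eq_empty f]; exact bddBelow_empty
      · obtain ⟨x₀⟩ := hα
        refine ⟨min (f x₀) (t + g x₀), ?_⟩
        rintro _ ⟨y, rfl⟩
        by_cases hfy : f x₀ ≤ f y
        · exact le_trans (min_le_left _ _) hfy
        · push_neg at hfy
          have h1 := H y x₀
          have h2 : g x₀ ≤ g y := by nlinarith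
          have hy' : t < k y :=
            lt_of_not_ge (fun hcon => Set.eq_empty_iff_forall_notMem.mp ht y hcon)
          have : f y - g y > t := hy'
          refine le_trans (min_le_right _ _) ?_
          linarith
    have bddRg : ∀ t : ℝ, {x | k x ≤ t} = ∅ → BddAbove (Set.range g) := by
      intro t ht
      rcases isEmpty_or_nonempty α with hα | hα
      · haveI := hα; rw [Set.range_eq_empty g]; exact bddAbove_empty
      · obtain ⟨x₀⟩ := hα
        refine ⟨max (g x₀) (f x₀ - t), ?_⟩
        rintro _ ⟨y, rfl⟩
        by_cases hgy : g y ≤ g x₀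
        · exact le_max_of_le_left hgy
        · push_neg at hgy
          have h1 := H y x₀
          have h2 : f y ≤ f x₀ := by nlinarith
          have hy' : t < k y :=
            lt_of_not_ge (fun hcon => Set.eq_empty_iff_forall_notMem.mp ht y hcon)
          have : f y - g y > t := hy'
          exact le_max_of_le_right (by linarith)
    set h₁ : ℝ → ℝ := fun t =>
      if ({x | k x ≤ t}).Nonempty then sSup (f '' {x | k x ≤ t}) else sInf (Set.range f)
      with hh₁
    set h₂ : ℝ → ℝ := fun t =>
      if ({x | k x ≤ t}).Nonempty then sInf (g '' {x | k x ≤ t}) else sSup (Set.range g)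
      with hh₂
    have hsub : ∀ {t₁ t₂ : ℝ}, t₁ ≤ t₂ → {x | k x ≤ t₁} ⊆ {x | k x ≤ t₂} :=
      fun h12 x hx => le_trans hx h12
    refine ⟨k, h₁, h₂, ?_, ?_, ?_, ?_⟩
    · -- Monotone h₁
      intro t₁ t₂ h12
      simp only [hh₁]
      by_cases h1 : ({x | k x ≤ t₁}).Nonempty
      · have h2 : ({x | k x ≤ t₂}).Nonempty := h1.mono (hsub h12)
        rw [if_pos h1, if_pos h2]
        exact csSup_le_csSup (bddA t₂) (h1.image f) (Set.image_mono (f := f) (hsub h12))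
      · rw [if_neg h1]
        by_cases h2 : ({x | k x ≤ t₂}).Nonempty
        · rw [if_pos h2]
          obtain ⟨y, hy⟩ := h2
          have hb : BddBelow (Set.range f) :=
            bddRf t₁ (Set.not_nonempty_iff_eq_empty.mp h1)
          exact le_trans (csInf_le hb ⟨y, rfl⟩) (le_csSup (bddA t₂) ⟨y, hy, rfl⟩)
        · rw [if_neg h2]
    · -- Antitone h₂
      intro t₁ t₂ h12
      simp only [hh₂]
      by_cases h1 : ({x | k x ≤ t₁}).Nonempty
      · have h2 : ({x | k x ≤ t₂}).Nonempty := h1.mono (hsub h12)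
        rw [if_pos h1, if_pos h2]
        exact csInf_le_csInf (bddB t₂) (h1.image g) (Set.image_mono (f := g) (hsub h12))
      · rw [if_neg h1]
        by_cases h2 : ({x | k x ≤ t₂}).Nonempty
        · rw [if_pos h2]
          obtain ⟨y, hy⟩ := h2
          have hb : BddAbove (Set.range g) :=
            bddRg t₁ (Set.not_nonempty_iff_eq_empty.mp h1)
          exact le_trans (csInf_le (bddB t₂) ⟨y, hy, rfl⟩) (le_csSup hb ⟨y, rfl⟩)
        · rw [if_neg h2]
    · -- f = h₁ ∘ k
      funext x
      have hne : ({y | k y ≤ k x}).Nonempty := ⟨x, show k x ≤ k x from le_rfl⟩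
      have hgr : IsGreatest (f '' {y | k y ≤ k x}) (f x) :=
        ⟨⟨x, show k x ≤ k x from le_rfl, rfl⟩, by rintro _ ⟨y, hy, rfl⟩; exact hf x y hy⟩
      simp only [Function.comp_apply, hh₁, if_pos hne, hgr.csSup_eq]
    · -- g = h₂ ∘ k
      funext x
      have hne : ({y | k y ≤ k x}).Nonempty := ⟨x, show k x ≤ k x from le_rfl⟩
      have hgr : IsLeast (g '' {y | k y ≤ k x}) (g x) :=
        ⟨⟨x, show k x ≤ k x from le_rfl, rfl⟩, by rintro _ ⟨y, hy, rfl⟩; exact hg x y hy⟩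
      simp only [Function.comp_apply, hh₂, if_pos hne, hgr.csInf_eq]
  · rintro ⟨k, h₁, h₂, m1, m2, rfl, rfl⟩ x x'
    simp only [Function.comp_apply]
    rcases le_total (k x) (k x') with h | h
    · have a1 := m1 h
      have a2 := m2 h
      nlinarith
    · have a1 := m1 h
      have a2 := m2 h
      nlinarith
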